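/- Let Δ₂, Δ₃ ∈ ℝ with Δ₃ ≠ 0 and Δ₁ := Δ₂² − 4Δ₃ > 0, and let ε ∈ ℝ. Define f(s) := (1 + Δ₂ s² + Δ₃ s⁴)^{1/4} · ((2 + (Δ₂ + √Δ₁)s²)/(2 + (Δ₂ − √Δ₁)s²))^{Δ₂/(4√Δ₁)}. Then on any open interval I containing 0 on which 1 + Δ₂ s² + Δ₃ s⁴ > 0, 2 + (Δ₂ + √Δ₁)s² > 0 and 2 + (Δ₂ − √Δ₁)s² > 0, the function u(s) := 1 + 2ε ∫₀ˢ f(σ) dσ satisfies equation (E₀), i.e. (1 + Δ₂ s² + Δ₃ s⁴) u''(s) = s(Δ₂ + Δ₃ s²) u'(s) for all s ∈ I, together with u(0) = 1 and u'(0) = 2ε. -/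

import Mathlib

/-- The integrand `f` in the case `Δ₃ ≠ 0`, `Δ₁ := Δ₂² − 4Δ₃ > 0`:
`f(s) = (1 + Δ₂ s² + Δ₃ s⁴)^{1/4} · ((2 + (Δ₂ + √Δ₁)s²)/(2 + (Δ₂ − √Δ₁)s²))^{Δ₂/(4√Δ₁)}`. -/
noncomputable def f7 (Δ₂ Δ₃ : ℝ) (s : ℝ) : ℝ :=
  (1 + Δ₂ * s ^ 2 + Δ₃ * s ^ 4) ^ ((1 : ℝ) / 4) *
    ((2 + (Δ₂ + Real.sqrt (Δ₂ ^ 2 - 4 * Δ₃)) * s ^ 2) /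
        (2 + (Δ₂ - Real.sqrt (Δ₂ ^ 2 - 4 * Δ₃)) * s ^ 2)) ^
      (Δ₂ / (4 * Real.sqrt (Δ₂ ^ 2 - 4 * Δ₃)))

/-- `u(s) = 1 + 2ε ∫₀ˢ f(σ) dσ`. -/
noncomputable def u7 (Δ₂ Δ₃ ε : ℝ) (s : ℝ) : ℝ :=
  1 + 2 * ε * ∫ σ in (0:ℝ)..s, f7 Δ₂ Δ₃ σ

lemma f7_hasDerivAt (Δ₂ Δ₃ : ℝ) (hΔ₁ : 0 < Δ₂ ^ 2 - 4 * Δ₃) (s : ℝ)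
    (hP : 0 < 1 + Δ₂ * s ^ 2 + Δ₃ * s ^ 4)
    (hA : 0 < 2 + (Δ₂ + Real.sqrt (Δ₂ ^ 2 - 4 * Δ₃)) * s ^ 2)
    (hB : 0 < 2 + (Δ₂ - Real.sqrt (Δ₂ ^ 2 - 4 * Δ₃)) * s ^ 2) :
    HasDerivAt (f7 Δ₂ Δ₃)
      (s * (Δ₂ + Δ₃ * s ^ 2) * f7 Δ₂ Δ₃ s / (1 + Δ₂ * s ^ 2 + Δ₃ * s ^ 4)) s := by
  set r := Real.sqrt (Δ₂ ^ 2 - 4 * Δ₃) with hrdef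
  have hr0 : 0 < r := Real.sqrt_pos.mpr hΔ₁
  have hr2 : r ^ 2 = Δ₂ ^ 2 - 4 * Δ₃ := Real.sq_sqrt hΔ₁.le
  have hΔ₃eq : Δ₃ = (Δ₂ ^ 2 - r ^ 2) / 4 := by linarith
  have hQ : 0 < (2 + (Δ₂ + r) * s ^ 2) / (2 + (Δ₂ - r) * s ^ 2) := div_pos hA hB
  have hPd : HasDerivAt (fun x => 1 + Δ₂ * x ^ 2 + Δ₃ * x ^ 4)
      (2 * Δ₂ * s + 4 * Δ₃ * s ^ 3) s := by
    have h1 := (hasDerivAt_pow 2 s).const_mul Δ₂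
    have h2 := (hasDerivAt_pow 4 s).const_mul Δ₃
    have := (h1.const_add 1).add h2
    exact this.congr_deriv (by norm_num; ring)
  have hAd : HasDerivAt (fun x => 2 + (Δ₂ + r) * x ^ 2) (2 * (Δ₂ + r) * s) s := by
    have := ((hasDerivAt_pow 2 s).const_mul (Δ₂ + r)).const_add 2
    exact this.congr_deriv (by norm_num; ring)
  have hBd : HasDerivAt (fun x => 2 + (Δ₂ - r) * x ^ 2) (2 * (Δ₂ - r) * s) s := by
    have := ((hasDerivAt_pow 2 s).const_mul (Δ₂ - r)).const_add 2
    exact this.congr_deriv (by norm_num; ring)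
  have hQd := hAd.div hBd hB.ne'
  have hXd := hPd.rpow_const (p := (1:ℝ)/4) (Or.inl hP.ne')
  have hYd := hQd.rpow_const (p := Δ₂ / (4 * r)) (Or.inl hQ.ne')
  have hf := hXd.mul hYd
  have hfeq : (fun y => (1 + Δ₂ * y ^ 2 + Δ₃ * y ^ 4) ^ ((1:ℝ)/4) *
      ((2 + (Δ₂ + r) * y ^ 2) / (2 + (Δ₂ - r) * y ^ 2)) ^ (Δ₂ / (4 * r))) = f7 Δ₂ Δ₃ := by
    funext y; simp [f7, hrdef]
  simp only [Pi.mul_def, Pi.div_apply] at hf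
  rw [hfeq] at hf
  refine hf.congr_deriv ?_
  symm
  rw [show ((1:ℝ)/4 - 1) = (1:ℝ)/4 + (-1) by ring,
      show (Δ₂ / (4 * r) - 1) = Δ₂ / (4 * r) + (-1) by ring,
      Real.rpow_add hP, Real.rpow_add hQ, Real.rpow_neg_one, Real.rpow_neg_one]
  simp only [f7, ← hrdef]
  set X := (1 + Δ₂ * s ^ 2 + Δ₃ * s ^ 4) ^ ((1:ℝ)/4)
  set Y := ((2 + (Δ₂ + r) * s ^ 2) / (2 + (Δ₂ - r) * s ^ 2)) ^ (Δ₂ / (4 * r))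
  have hAB : (2 + (Δ₂ + r) * s ^ 2) * (2 + (Δ₂ - r) * s ^ 2)
      = 4 * (1 + Δ₂ * s ^ 2 + Δ₃ * s ^ 4) := by
    linear_combination (-s ^ 4) * hr2
  generalize hPdef : 1 + Δ₂ * s ^ 2 + Δ₃ * s ^ 4 = P at hP ⊢
  generalize hAdef : 2 + (Δ₂ + r) * s ^ 2 = A at hA ⊢
  generalize hBdef : 2 + (Δ₂ - r) * s ^ 2 = B at hB ⊢
  field_simp [hP.ne', hA.ne', hB.ne', hr0.ne']
  subst hPdef hAdef hBdef
  rw [hΔ₃eq]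
  ring
theorem stmt7 (Δ₂ Δ₃ ε : ℝ) (hΔ₃ : Δ₃ ≠ 0) (hΔ₁ : 0 < Δ₂ ^ 2 - 4 * Δ₃)
    (a b : ℝ) (ha : a < 0) (hb : 0 < b)
    (hpos : ∀ s ∈ Set.Ioo a b,
      0 < 1 + Δ₂ * s ^ 2 + Δ₃ * s ^ 4 ∧
      0 < 2 + (Δ₂ + Real.sqrt (Δ₂ ^ 2 - 4 * Δ₃)) * s ^ 2 ∧
      0 < 2 + (Δ₂ - Real.sqrt (Δ₂ ^ 2 - 4 * Δ₃)) * s ^ 2) :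
    (∀ s ∈ Set.Ioo a b,
      (1 + Δ₂ * s ^ 2 + Δ₃ * s ^ 4) * deriv (deriv (u7 Δ₂ Δ₃ ε)) s
        = s * (Δ₂ + Δ₃ * s ^ 2) * deriv (u7 Δ₂ Δ₃ ε) s) ∧
    u7 Δ₂ Δ₃ ε 0 = 1 ∧
    deriv (u7 Δ₂ Δ₃ ε) 0 = 2 * ε := by
  have h0 : (0:ℝ) ∈ Set.Ioo a b := ⟨ha, hb⟩
  have hopen : IsOpen (Set.Ioo a b) := isOpen_Ioo
  have hfd : ∀ s ∈ Set.Ioo a b, HasDerivAt (f7 Δ₂ Δ₃)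
      (s * (Δ₂ + Δ₃ * s ^ 2) * f7 Δ₂ Δ₃ s / (1 + Δ₂ * s ^ 2 + Δ₃ * s ^ 4)) s := fun s hs =>
    f7_hasDerivAt Δ₂ Δ₃ hΔ₁ s (hpos s hs).1 (hpos s hs).2.1 (hpos s hs).2.2
  have hfc : ∀ s ∈ Set.Ioo a b, ContinuousAt (f7 Δ₂ Δ₃) s := fun s hs => (hfd s hs).continuousAt
  have hmeas := ContinuousAt.stronglyMeasurableAtFilter (μ := MeasureTheory.volume) hopen hfc
  have hud : ∀ s ∈ Set.Ioo a b, HasDerivAt (u7 Δ₂ Δ₃ ε) (2 * ε * f7 Δ₂ Δ₃ s) s := by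
    intro s hs
    have hsub : Set.uIcc 0 s ⊆ Set.Ioo a b := Set.ordConnected_Ioo.uIcc_subset h0 hs
    have hint : IntervalIntegrable (f7 Δ₂ Δ₃) MeasureTheory.volume 0 s :=
      (continuousOn_of_forall_continuousAt (fun x hx => hfc x (hsub hx))).intervalIntegrable
    have h1 := intervalIntegral.integral_hasDerivAt_right hint (hmeas s hs) (hfc s hs)
    exact (h1.const_mul (2 * ε)).const_add 1
  have hderiv_eq : ∀ s ∈ Set.Ioo a b, deriv (u7 Δ₂ Δ₃ ε) s = 2 * ε * f7 Δ₂ Δ₃ s :=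
    fun s hs => (hud s hs).deriv
  refine ⟨?_, ?_, ?_⟩
  · intro s hs
    obtain ⟨hP, -, -⟩ := hpos s hs
    have hev : deriv (u7 Δ₂ Δ₃ ε) =ᶠ[nhds s] fun x => 2 * ε * f7 Δ₂ Δ₃ x :=
      Filter.eventuallyEq_of_mem (hopen.mem_nhds hs) hderiv_eq
    have h2 : deriv (deriv (u7 Δ₂ Δ₃ ε)) s
        = 2 * ε * (s * (Δ₂ + Δ₃ * s ^ 2) * f7 Δ₂ Δ₃ s / (1 + Δ₂ * s ^ 2 + Δ₃ * s ^ 4)) := by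
      rw [hev.deriv_eq]
      exact ((hfd s hs).const_mul (2 * ε)).deriv
    rw [h2, hderiv_eq s hs]
    rw [mul_div_assoc', mul_div_assoc', mul_div_cancel_left₀ _ hP.ne']
    ring
  · simp [u7]
  · rw [hderiv_eq 0 h0]
    have : f7 Δ₂ Δ₃ 0 = 1 := by simp [f7]
    rw [this, mul_one]
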